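/- arXiv:2112.04161 — 4 statements merged into one kernel-verified Lean document; each statement's English description precedes it below -/
import Mathlib

section
/- Finite-dimensional complete class theorem: Let Θ be a finite set and let the risk set S ⊆ ℝ^Θ be nonempty, convex, and closed. If r ∈ S is the risk profile of an admissible rule (i.e., no s ∈ S satisfies s ≤ r coordinatewise with strict inequality in some coordinate), then there exists a probability vector π ∈ Δ(Θ) such that Σ_θ π(θ)·r(θ) ≤ Σ_θ π(θ)·s(θ) for all s ∈ S. -/
/-- Finite-dimensional complete class theorem: if `r` is an admissible point of a
nonempty closed convex risk set `S ⊆ ℝ^Θ`, then there is a prior `π ∈ Δ(Θ)` for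
which `r` minimizes the Bayes risk over `S`. -/
theorem finite_complete_class {Θ : Type*} [Fintype Θ] [Nonempty Θ]
    (S : Set (Θ → ℝ)) (hne : S.Nonempty) (hconv : Convex ℝ S) (hclosed : IsClosed S)
    (r : Θ → ℝ) (hr : r ∈ S)
    (hadm : ¬ ∃ s ∈ S, (∀ θ, s θ ≤ r θ) ∧ ∃ θ₀, s θ₀ < r θ₀) :
    ∃ π : Θ → ℝ, (∀ θ, 0 ≤ π θ) ∧ (∑ θ, π θ = 1) ∧
      ∀ s ∈ S, ∑ θ, π θ * r θ ≤ ∑ θ, π θ * s θ := by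
  classical
  set A : Set (Θ → ℝ) := {x | ∀ θ, x θ < r θ} with hA
  have hAopen : IsOpen A := by
    have : A = ⋂ θ, {x : Θ → ℝ | x θ < r θ} := by ext x; simp [hA]
    rw [this]
    exact isOpen_iInter_of_finite fun θ =>
      isOpen_lt (continuous_apply θ) continuous_const
  have hAconv : Convex ℝ A := by
    have : A = ⋂ θ, {x : Θ → ℝ | x θ < r θ} := by ext x; simp [hA]
    rw [this]
    exact convex_iInter fun θ =>
      convex_halfSpace_lt ⟨fun a b => rfl, fun c x => rfl⟩ (r θ)
  have hdisj : Disjoint A S := by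
    rw [Set.disjoint_left]
    intro x hx hxS
    exact hadm ⟨x, hxS, fun θ => (hx θ).le, Classical.arbitrary Θ, hx _⟩
  obtain ⟨f, u, hfA, hfS⟩ := geometric_hahn_banach_open hAconv hAopen hconv hdisj
  -- every point ≤ r is in the closure of A
  have hxcl : ∀ x : Θ → ℝ, (∀ θ, x θ ≤ r θ) → x ∈ closure A := by
    intro x hx
    have htend : Filter.Tendsto (fun n : ℕ => x - (1 / ((n : ℝ) + 1)) • (1 : Θ → ℝ))
        Filter.atTop (nhds x) := by
      have h0 : Filter.Tendsto (fun n : ℕ => (1 / ((n : ℝ) + 1))) Filter.atTop (nhds 0) :=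
        tendsto_one_div_add_atTop_nhds_zero_nat
      have := h0.smul_const (1 : Θ → ℝ)
      simpa using (tendsto_const_nhds (x := x)).sub this
    refine mem_closure_of_tendsto htend (Filter.Eventually.of_forall fun n => ?_)
    intro θ
    have hpos : (0 : ℝ) < (1 / ((n : ℝ) + 1)) := by positivity
    have : x θ - (1 / ((n : ℝ) + 1)) < x θ := by linarith
    calc x θ - (1 / ((n : ℝ) + 1)) * 1 < x θ := by linarith
      _ ≤ r θ := hx θ
  have hle : ∀ x : Θ → ℝ, (∀ θ, x θ ≤ r θ) → f x ≤ u := by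
    intro x hx
    have hsub : closure A ⊆ {y | f y ≤ u} :=
      closure_minimal (fun a ha => (hfA a ha).le)
        (isClosed_le f.continuous continuous_const)
    exact hsub (hxcl x hx)
  have hfr : f r = u := le_antisymm (hle r fun θ => le_refl _) (hfS r hr)
  -- coordinates of f
  set p : Θ → ℝ := fun θ => f ((Pi.single θ 1 : Θ → ℝ)) with hp
  have hpnn : ∀ θ, 0 ≤ p θ := by
    intro θ
    have h1 : ∀ θ', (r - Pi.single θ 1 : Θ → ℝ) θ' ≤ r θ' := by
      intro θ'
      simp only [Pi.sub_apply, Pi.single_apply]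
      split <;> simp
    have h2 : f (r - Pi.single θ 1 : Θ → ℝ) ≤ u := hle _ h1
    have h3 : f (r - Pi.single θ 1 : Θ → ℝ) = f r - p θ := by
      rw [map_sub]
    rw [h3, hfr] at h2
    linarith
  have hrep : ∀ x : Θ → ℝ, f x = ∑ θ, x θ * p θ := by
    intro x
    have hxeq : x = ∑ θ, x θ • (Pi.single θ 1 : Θ → ℝ) := by
      funext θ'
      rw [Finset.sum_apply]
      simp [Pi.single_apply]
    conv_lhs => rw [hxeq]
    rw [map_sum]
    simp [hp, smul_eq_mul]
  -- total mass is positive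
  have hTnn : 0 ≤ ∑ θ, p θ := Finset.sum_nonneg fun θ _ => hpnn θ
  have hTpos : 0 < ∑ θ, p θ := by
    rcases hTnn.lt_or_eq with h | h
    · exact h
    · exfalso
      have hz : ∀ θ ∈ Finset.univ, p θ = 0 := by
        have h' := h.symm
        rw [Finset.sum_eq_zero_iff_of_nonneg (fun θ _ => hpnn θ)] at h'
        exact fun θ hθ => h' θ hθ
      have hmem : (r - 1 : Θ → ℝ) ∈ A := by
        intro θ; simp
      have hlt : f (r - 1) < u := hfA _ hmem
      have e1 : f (r - 1) = 0 := by
        rw [hrep]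
        exact Finset.sum_eq_zero fun θ hθ => by rw [hz θ hθ, mul_zero]
      have e2 : f r = 0 := by
        rw [hrep]
        exact Finset.sum_eq_zero fun θ hθ => by rw [hz θ hθ, mul_zero]
      rw [e1] at hlt; rw [e2] at hfr; linarith
  set T := ∑ θ, p θ with hT
  refine ⟨fun θ => p θ / T, fun θ => div_nonneg (hpnn θ) hTnn, ?_, ?_⟩
  · rw [← Finset.sum_div, ← hT, div_self hTpos.ne']
  · intro s hs
    have hfrs : f r ≤ f s := hfr ▸ hfS s hs
    rw [hrep, hrep] at hfrs
    have e : ∀ x : Θ → ℝ, ∑ θ, p θ / T * x θ = (∑ θ, x θ * p θ) / T := by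
      intro x
      rw [Finset.sum_div]
      exact Finset.sum_congr rfl fun θ _ => by ring
    rw [e, e]
    exact (div_le_div_iff_of_pos_right hTpos).mpr hfrs
end

section
/- Duality for consistency (one direction, finite dimensions): let π₁, π₂, π ∈ Δ(Θ) with Θ finite, and suppose for all s₁, s₂ ∈ ℝ^Θ, (⟨π₁, s₁ - s₂⟩ ≥ 0 and ⟨π₂, s₁ - s₂⟩ ≥ 0) implies ⟨π, s₁ - s₂⟩ ≥ 0. Then π = λ·π₁ + (1-λ)·π₂ for some λ ∈ [0,1]. -/
/-- Duality for consistency (finite dimensions): if every vector `v` weakly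
approved by both `π₁` and `π₂` is weakly approved by `π`, then `π` is a convex
combination of `π₁` and `π₂`. -/
theorem consistency_duality {Θ : Type*} [Fintype Θ] [Nonempty Θ]
    (π₁ π₂ π : Θ → ℝ)
    (hπ₁ : (∀ θ, 0 ≤ π₁ θ) ∧ ∑ θ, π₁ θ = 1)
    (hπ₂ : (∀ θ, 0 ≤ π₂ θ) ∧ ∑ θ, π₂ θ = 1)
    (hπ : (∀ θ, 0 ≤ π θ) ∧ ∑ θ, π θ = 1)
    (hcons : ∀ v : Θ → ℝ,
      0 ≤ ∑ θ, π₁ θ * v θ → 0 ≤ ∑ θ, π₂ θ * v θ → 0 ≤ ∑ θ, π θ * v θ) :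
    ∃ lam : ℝ, 0 ≤ lam ∧ lam ≤ 1 ∧ ∀ θ, π θ = lam * π₁ θ + (1 - lam) * π₂ θ := by
  obtain ⟨-, h1⟩ := hπ₁
  obtain ⟨-, h2⟩ := hπ₂
  obtain ⟨-, hp⟩ := hπ
  have shift : ∀ (w : Θ → ℝ), (∑ θ, w θ) = 1 → ∀ (v : Θ → ℝ) (c : ℝ),
      ∑ θ, w θ * (v θ - c) = (∑ θ, w θ * v θ) - c := by
    intro w hw v c
    have : ∑ θ, w θ * (v θ - c) = (∑ θ, w θ * v θ) - c * ∑ θ, w θ := by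
      rw [Finset.mul_sum, ← Finset.sum_sub_distrib]
      congr 1; ext θ; ring
    rw [this, hw, mul_one]
  have hmin : ∀ (v : Θ → ℝ) (c : ℝ), c ≤ ∑ θ, π₁ θ * v θ → c ≤ ∑ θ, π₂ θ * v θ →
      c ≤ ∑ θ, π θ * v θ := by
    intro v c hc1 hc2
    have := hcons (fun θ => v θ - c)
      (by rw [shift π₁ h1]; linarith) (by rw [shift π₂ h2]; linarith)
    rw [shift π hp] at this; linarith
  have heq : ∀ (v : Θ → ℝ), (∑ θ, π₁ θ * v θ) = (∑ θ, π₂ θ * v θ) →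
      (∑ θ, π θ * v θ) = ∑ θ, π₂ θ * v θ := by
    intro v hv
    have hlow := hmin v (∑ θ, π₂ θ * v θ) (le_of_eq hv.symm) le_rfl
    have hhigh := hmin (fun θ => -v θ) (-∑ θ, π₂ θ * v θ) ?_ ?_
    · simp only [mul_neg, Finset.sum_neg_distrib] at hhigh
      linarith
    · simp only [mul_neg, Finset.sum_neg_distrib]; linarith
    · simp only [mul_neg, Finset.sum_neg_distrib]; exact le_rfl
  classical
  set d : Θ → ℝ := fun θ => π₁ θ - π₂ θ with hd
  set D : ℝ := ∑ θ, d θ * d θ with hD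
  have hDnn : 0 ≤ D := Finset.sum_nonneg fun θ _ => mul_self_nonneg _
  by_cases hD0 : D = 0
  · -- π₁ = π₂, and π = π₁
    have hdz : ∀ θ, d θ = 0 := by
      intro θ
      have hz : ∑ θ, d θ * d θ = 0 := by rw [← hD]; exact hD0
      have h := (Finset.sum_eq_zero_iff_of_nonneg (fun θ _ => mul_self_nonneg (d θ))).mp hz θ (Finset.mem_univ θ)
      nlinarith [h]
    refine ⟨1, zero_le_one, le_rfl, fun θ₀ => ?_⟩
    have hv := heq (fun θ => if θ = θ₀ then 1 else 0) ?_
    · simp [Finset.sum_ite_eq'] at hv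
      have := hdz θ₀
      simp [hd] at this
      simp [hv, this]
      linarith
    · have : ∀ θ, π₁ θ = π₂ θ := fun θ => by have := hdz θ; simp [hd] at this; linarith
      simp [this]
  · have hDpos : 0 < D := lt_of_le_of_ne hDnn (Ne.symm hD0)
    set lam : ℝ := (∑ θ, d θ * (π θ - π₂ θ)) / D with hlam
    set r : Θ → ℝ := fun θ => π θ - π₂ θ - lam * d θ with hr
    have hdr : ∑ θ, d θ * r θ = 0 := by
      have : ∑ θ, d θ * r θ = (∑ θ, d θ * (π θ - π₂ θ)) - lam * D := by
        rw [hD, Finset.mul_sum, ← Finset.sum_sub_distrib]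
        congr 1; ext θ; simp [hr]; ring
      rw [this, hlam]; field_simp; ring
    -- r = 0
    have hπr : (∑ θ, π θ * r θ) = ∑ θ, π₂ θ * r θ := by
      apply heq
      have : (∑ θ, π₁ θ * r θ) - (∑ θ, π₂ θ * r θ) = ∑ θ, d θ * r θ := by
        rw [← Finset.sum_sub_distrib]; congr 1; ext θ; simp [hd]; ring
      linarith [this, hdr]
    have hrr : ∑ θ, r θ * r θ = 0 := by
      have expand : ∑ θ, r θ * r θ = (∑ θ, π θ * r θ) - (∑ θ, π₂ θ * r θ) - lam * ∑ θ, d θ * r θ := by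
        rw [Finset.mul_sum, ← Finset.sum_sub_distrib, ← Finset.sum_sub_distrib]
        congr 1; ext θ; simp [hr]; ring
      rw [expand, hπr, hdr]; ring
    have hrz : ∀ θ, r θ = 0 := by
      intro θ
      have h := (Finset.sum_eq_zero_iff_of_nonneg (fun θ _ => mul_self_nonneg (r θ))).mp hrr θ (Finset.mem_univ θ)
      nlinarith [h]
    have hform : ∀ θ, π θ = π₂ θ + lam * d θ := by
      intro θ; have := hrz θ; simp [hr] at this; linarith
    -- bounds on lam
    have hpid : ∀ (w : Θ → ℝ), ∑ θ, w θ * d θ = (∑ θ, w θ * π₁ θ) - ∑ θ, w θ * π₂ θ := by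
      intro w; rw [← Finset.sum_sub_distrib]; congr 1; ext θ; simp [hd]; ring
    have hπd : (∑ θ, π θ * d θ) = (∑ θ, π₂ θ * d θ) + lam * D := by
      rw [hD, Finset.mul_sum, ← Finset.sum_add_distrib]
      congr 1; ext θ; rw [hform θ]; ring
    have hπ₁d : (∑ θ, π₁ θ * d θ) = (∑ θ, π₂ θ * d θ) + D := by
      rw [hD, ← Finset.sum_add_distrib]
      congr 1; ext θ; simp [hd]; ring
    have hlow := hmin d (∑ θ, π₂ θ * d θ) (by rw [hπ₁d]; linarith) le_rfl
    have hlam0 : 0 ≤ lam := by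
      rw [hπd] at hlow; nlinarith
    have hhigh := hmin (fun θ => -d θ) (-∑ θ, π₁ θ * d θ) ?_ ?_
    · simp only [mul_neg, Finset.sum_neg_distrib] at hhigh
      have : (∑ θ, π θ * d θ) ≤ ∑ θ, π₁ θ * d θ := by linarith
      rw [hπd, hπ₁d] at this
      have hlam1 : lam ≤ 1 := by nlinarith
      exact ⟨lam, hlam0, hlam1, fun θ => by rw [hform θ]; simp [hd]; ring⟩
    · simp only [mul_neg, Finset.sum_neg_distrib]
      exact le_rfl
    · simp only [mul_neg, Finset.sum_neg_distrib]
      rw [hπ₁d]; linarith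
end

section
/- Strict duality for consistency: let π₁, π₂, π ∈ Δ(Θ) with Θ finite, π₁ ≠ π₂, and suppose for all v ∈ ℝ^Θ, (⟨π₁, v⟩ > 0 and ⟨π₂, v⟩ ≥ 0) implies ⟨π, v⟩ > 0, and also (⟨π₁, v⟩ ≥ 0 and ⟨π₂, v⟩ ≥ 0) implies ⟨π, v⟩ ≥ 0. Then π = λ·π₁ + (1-λ)·π₂ for some λ ∈ (0,1]. -/
/-- Strict duality for consistency: under the strict and weak approval-preservation
conditions, `π` is a convex combination `λ·π₁ + (1-λ)·π₂` with `λ ∈ (0,1]`. -/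
theorem strict_consistency_duality {Θ : Type*} [Fintype Θ] [Nonempty Θ]
    (π₁ π₂ π : Θ → ℝ)
    (hπ₁ : (∀ θ, 0 ≤ π₁ θ) ∧ ∑ θ, π₁ θ = 1)
    (hπ₂ : (∀ θ, 0 ≤ π₂ θ) ∧ ∑ θ, π₂ θ = 1)
    (hπ : (∀ θ, 0 ≤ π θ) ∧ ∑ θ, π θ = 1)
    (hne : π₁ ≠ π₂)
    (hstrict : ∀ v : Θ → ℝ,
      0 < ∑ θ, π₁ θ * v θ → 0 ≤ ∑ θ, π₂ θ * v θ → 0 < ∑ θ, π θ * v θ)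
    (hweak : ∀ v : Θ → ℝ,
      0 ≤ ∑ θ, π₁ θ * v θ → 0 ≤ ∑ θ, π₂ θ * v θ → 0 ≤ ∑ θ, π θ * v θ) :
    ∃ lam : ℝ, 0 < lam ∧ lam ≤ 1 ∧ ∀ θ, π θ = lam * π₁ θ + (1 - lam) * π₂ θ := by
  -- Step 1: π lies in the span of π₁, π₂ (via orthogonal complements in Euclidean space)
  have hab : ∃ a b : ℝ, ∀ θ, π θ = a * π₁ θ + b * π₂ θ := by
    let p₁ : EuclideanSpace ℝ Θ := WithLp.toLp 2 π₁
    let p₂ : EuclideanSpace ℝ Θ := WithLp.toLp 2 π₂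
    let p : EuclideanSpace ℝ Θ := WithLp.toLp 2 π
    have key : p ∈ Submodule.span ℝ ({p₁, p₂} : Set (EuclideanSpace ℝ Θ)) := by
      rw [← Submodule.orthogonal_orthogonal (Submodule.span ℝ {p₁, p₂})]
      rw [Submodule.mem_orthogonal]
      intro w hw
      have h1 : ∑ θ, π₁ θ * w θ = 0 := by
        have := hw p₁ (Submodule.subset_span (by simp))
        simpa [PiLp.inner_apply, RCLike.inner_apply, p₁, mul_comm] using this
      have h2 : ∑ θ, π₂ θ * w θ = 0 := by
        have := hw p₂ (Submodule.subset_span (by simp))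
        simpa [PiLp.inner_apply, RCLike.inner_apply, p₂, mul_comm] using this
      have hA := hweak w h1.ge h2.ge
      have hB := hweak (-w) (by simpa using h1.le) (by simpa using h2.le)
      have hB' : ∑ θ, π θ * w θ ≤ 0 := by
        have : (0:ℝ) ≤ -∑ θ, π θ * w θ := by simpa [← Finset.sum_neg_distrib] using hB
        linarith
      have : ∑ θ, π θ * w θ = 0 := le_antisymm hB' hA
      simpa [PiLp.inner_apply, RCLike.inner_apply, p, mul_comm] using this
    obtain ⟨a, b, h⟩ := Submodule.mem_span_pair.mp key
    exact ⟨a, b, fun θ => by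
      have := congrArg (fun x => x θ) h
      simpa [p, p₁, p₂, mul_comm] using this.symm⟩
  obtain ⟨a, b, hab⟩ := hab
  -- Step 2: elementary computations with test vectors
  have hD : 0 < ∑ θ, (π₁ θ - π₂ θ)^2 := by
    obtain ⟨θ0, h0⟩ : ∃ θ, π₁ θ ≠ π₂ θ := by
      by_contra h; push_neg at h; exact hne (funext h)
    exact Finset.sum_pos' (fun θ _ => sq_nonneg _)
      ⟨θ0, Finset.mem_univ _, by have := sub_ne_zero.mpr h0; positivity⟩
  set D := ∑ θ, (π₁ θ - π₂ θ)^2 with hDdef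
  have hlin : ∀ v : Θ → ℝ, ∑ θ, π θ * v θ = a * ∑ θ, π₁ θ * v θ + b * ∑ θ, π₂ θ * v θ := by
    intro v
    rw [Finset.mul_sum, Finset.mul_sum, ← Finset.sum_add_distrib]
    exact Finset.sum_congr rfl fun θ _ => by rw [hab θ]; ring
  have hsum : a + b = 1 := by
    have h := hπ.2
    rw [show ∑ θ, π θ = a * ∑ θ, π₁ θ + b * ∑ θ, π₂ θ by
      rw [Finset.mul_sum, Finset.mul_sum, ← Finset.sum_add_distrib]
      exact Finset.sum_congr rfl fun θ _ => hab θ] at h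
    rw [hπ₁.2, hπ₂.2] at h; linarith
  have ha : 0 < a := by
    set c : ℝ := ∑ θ, π₂ θ * (π₂ θ - π₁ θ) with hc
    set v : Θ → ℝ := fun θ => π₁ θ - π₂ θ + c with hv
    have e2 : ∑ θ, π₂ θ * v θ = 0 := by
      have h : ∑ θ, π₂ θ * v θ = ∑ θ, π₂ θ * (π₁ θ - π₂ θ) + (∑ θ, π₂ θ) * c := by
        rw [Finset.sum_mul, ← Finset.sum_add_distrib]
        exact Finset.sum_congr rfl fun θ _ => by simp [hv]; ring
      rw [h, hπ₂.2, one_mul, hc, ← Finset.sum_add_distrib]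
      exact Finset.sum_eq_zero fun θ _ => by ring
    have e1 : ∑ θ, π₁ θ * v θ = D := by
      have h : ∑ θ, π₁ θ * v θ = ∑ θ, π₁ θ * (π₁ θ - π₂ θ) + (∑ θ, π₁ θ) * c := by
        rw [Finset.sum_mul, ← Finset.sum_add_distrib]
        exact Finset.sum_congr rfl fun θ _ => by simp [hv]; ring
      rw [h, hπ₁.2, one_mul, hc, ← Finset.sum_add_distrib, hDdef]
      exact Finset.sum_congr rfl fun θ _ => by ring
    have h := hstrict v (e1 ▸ hD) e2.ge
    rw [hlin v, e1, e2, mul_zero, add_zero] at h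
    by_contra hcon
    push_neg at hcon
    nlinarith
  have hb : 0 ≤ b := by
    set c : ℝ := ∑ θ, π₁ θ * (π₁ θ - π₂ θ) with hc
    set v : Θ → ℝ := fun θ => π₂ θ - π₁ θ + c with hv
    have e1 : ∑ θ, π₁ θ * v θ = 0 := by
      have h : ∑ θ, π₁ θ * v θ = ∑ θ, π₁ θ * (π₂ θ - π₁ θ) + (∑ θ, π₁ θ) * c := by
        rw [Finset.sum_mul, ← Finset.sum_add_distrib]
        exact Finset.sum_congr rfl fun θ _ => by simp [hv]; ring
      rw [h, hπ₁.2, one_mul, hc, ← Finset.sum_add_distrib]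
      exact Finset.sum_eq_zero fun θ _ => by ring
    have e2 : ∑ θ, π₂ θ * v θ = D := by
      have h : ∑ θ, π₂ θ * v θ = ∑ θ, π₂ θ * (π₂ θ - π₁ θ) + (∑ θ, π₂ θ) * c := by
        rw [Finset.sum_mul, ← Finset.sum_add_distrib]
        exact Finset.sum_congr rfl fun θ _ => by simp [hv]; ring
      rw [h, hπ₂.2, one_mul, hc, ← Finset.sum_add_distrib, hDdef]
      exact Finset.sum_congr rfl fun θ _ => by ring
    have h := hweak v e1.ge (e2 ▸ hD.le)
    rw [hlin v, e1, e2, mul_zero, zero_add] at h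
    by_contra hcon
    push_neg at hcon
    nlinarith
  exact ⟨a, ha, by linarith, fun θ => by rw [hab θ]; have : b = 1 - a := by linarith
                                         rw [this]⟩
end

section
/- Uniqueness of the weight function up to positive scaling: suppose g(A) = (Σ_{e∈A} w(e)·π_e)/(Σ_{e∈A} w(e)) = (Σ_{e∈A} w'(e)·π_e)/(Σ_{e∈A} w'(e)) for all finite nonempty A ⊆ E, where the priors π_e ∈ Δ(Θ) are affinely independent and |E| ≥ 3 (the range is not contained in a one-dimensional affine variety). Then there exists c > 0 with w'(e) = c·w(e) for all e ∈ E. -/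
open Finset in
/-- Uniqueness of the weight function up to positive scaling: if two positive weight
functions `w` and `w'` induce the same weighted-average aggregation of affinely
independent priors `π_e` (with `|E| ≥ 3`), then `w' = c·w` for some `c > 0`. -/
theorem weight_unique_up_to_scaling {E Θ : Type*} [Fintype E] [DecidableEq E] [Fintype Θ]
    (hcard : 3 ≤ Fintype.card E)
    (π : E → Θ → ℝ) (hπ : ∀ e, (∀ θ, 0 ≤ π e θ) ∧ ∑ θ, π e θ = 1)
    (hindep : AffineIndependent ℝ π)
    (w w' : E → ℝ) (hw : ∀ e, 0 < w e) (hw' : ∀ e, 0 < w' e)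
    (hsame : ∀ A : Finset E, A.Nonempty → ∀ θ,
      (∑ e ∈ A, w e * π e θ) / (∑ e ∈ A, w e)
        = (∑ e ∈ A, w' e * π e θ) / (∑ e ∈ A, w' e)) :
    ∃ c : ℝ, 0 < c ∧ ∀ e, w' e = c * w e := by
  have hpos : 0 < Fintype.card E := by omega
  obtain ⟨e0⟩ := Fintype.card_pos_iff.mp hpos
  refine ⟨w' e0 / w e0, div_pos (hw' e0) (hw e0), fun e => ?_⟩
  rcases eq_or_ne e e0 with rfl | hne
  · rw [div_mul_cancel₀ _ (hw _).ne']
  · have hπne : π e ≠ π e0 := fun h => hne (hindep.injective h)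
    obtain ⟨θ, hθ⟩ : ∃ θ, π e θ ≠ π e0 θ := by
      by_contra h; push_neg at h; exact hπne (funext h)
    have h := hsame {e, e0} ⟨e, by simp⟩ θ
    rw [Finset.sum_pair hne, Finset.sum_pair hne, Finset.sum_pair hne,
      Finset.sum_pair hne] at h
    have d1 : (0:ℝ) < w e + w e0 := add_pos (hw e) (hw e0)
    have d2 : (0:ℝ) < w' e + w' e0 := add_pos (hw' e) (hw' e0)
    have h' : (w e * π e θ + w e0 * π e0 θ) * (w' e + w' e0)
        = (w' e * π e θ + w' e0 * π e0 θ) * (w e + w e0) := by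
      rw [div_eq_div_iff d1.ne' d2.ne'] at h
      linarith
    have key : w e * w' e0 = w' e * w e0 := by
      have hfac : (w e * w' e0 - w' e * w e0) * (π e θ - π e0 θ) = 0 := by
        linear_combination h'
      rcases mul_eq_zero.mp hfac with h0 | h0
      · linarith
      · exact absurd (by linarith : π e θ = π e0 θ) hθ
    rw [div_mul_eq_mul_div, eq_div_iff (hw e0).ne']
    linear_combination -key
end
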